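/- arXiv:2101.00976 — 2 statements merged into one kernel-verified Lean document; each statement's English description precedes it below -/
import Mathlib

section
/- Let g : ℝ × ℝ → ℝ be twice continuously differentiable (C²) and define F on ℝ² \ {0} by F(x₁,x₂) = g(x₁, x) where x = √(x₁² + x₂²). Then at every point (x₁,x₂) ≠ (0,0), ΔF = g₁₁(x₁,x) + g₂₂(x₁,x) + 2·(x₁/x)·g₁₂(x₁,x) + (1/x)·g₂(x₁,x), where gᵢ and gᵢⱼ denote first and second partial derivatives of g with respect to its i-th (and j-th) argument (the Laplacian in the nested rectangular coordinate system (x₁, x)). -/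
/-- The Laplacian `∂²F/∂x₁² + ∂²F/∂x₂²` of a function `F : ℝ → ℝ → ℝ`
(curried function of two real variables) at the point `(a, b)`. -/
noncomputable def lap2 (F : ℝ → ℝ → ℝ) (a b : ℝ) : ℝ :=
  deriv (fun s => deriv (fun u => F u b) s) a +
  deriv (fun s => deriv (fun u => F a u) s) b

/-- Partial derivative of `g : ℝ × ℝ → ℝ` with respect to its first argument. -/
noncomputable def pd1 (g : ℝ × ℝ → ℝ) (p : ℝ × ℝ) : ℝ :=
  deriv (fun t => g (t, p.2)) p.1

/-- Partial derivative of `g : ℝ × ℝ → ℝ` with respect to its second argument. -/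
noncomputable def pd2 (g : ℝ × ℝ → ℝ) (p : ℝ × ℝ) : ℝ :=
  deriv (fun t => g (p.1, t)) p.2

lemma hasDerivAt_sqrt_comp {a b : ℝ} (h : a^2 + b^2 ≠ 0) :
    HasDerivAt (fun t => Real.sqrt (t^2 + b^2)) (a / Real.sqrt (a^2 + b^2)) a := by
  have hpos : 0 < a^2 + b^2 := lt_of_le_of_ne (by positivity) (Ne.symm h)
  have hs : 0 < Real.sqrt (a^2 + b^2) := Real.sqrt_pos.2 hpos
  have h1 : HasDerivAt (fun t : ℝ => t^2 + b^2) (2*a) a := by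
    simpa [mul_comm] using ((hasDerivAt_pow 2 a).add_const (b^2))
  have h2 := (Real.hasDerivAt_sqrt h).comp a h1
  refine h2.congr_deriv ?_
  field_simp

lemma hasDerivAt_sqrt_comp' {a b : ℝ} (h : a^2 + b^2 ≠ 0) :
    HasDerivAt (fun t => Real.sqrt (a^2 + t^2)) (b / Real.sqrt (a^2 + b^2)) b := by
  have h' : b^2 + a^2 ≠ 0 := by rwa [add_comm]
  have := hasDerivAt_sqrt_comp h'
  simpa [add_comm] using this

lemma hasDerivAt_comp2 {h : ℝ × ℝ → ℝ} {u v : ℝ → ℝ} {u' v' t : ℝ}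
    (hh : DifferentiableAt ℝ h (u t, v t))
    (hu : HasDerivAt u u' t) (hv : HasDerivAt v v' t) :
    HasDerivAt (fun s => h (u s, v s))
      (fderiv ℝ h (u t, v t) (1,0) * u' + fderiv ℝ h (u t, v t) (0,1) * v') t := by
  have hc : HasDerivAt (fun s => ((u s, v s) : ℝ × ℝ)) (u', v') t := hu.prodMk hv
  have h2 := hh.hasFDerivAt.comp_hasDerivAt t hc
  refine h2.congr_deriv ?_
  have he : ((u', v') : ℝ × ℝ) = u' • ((1,0) : ℝ×ℝ) + v' • ((0,1) : ℝ×ℝ) := by simp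
  rw [he, map_add, map_smul, map_smul]
  simp [smul_eq_mul]
  ring

lemma hasFDerivAt_applyv {g : ℝ × ℝ → ℝ} (hg : ContDiff ℝ 2 g) (v : ℝ × ℝ) (p : ℝ × ℝ) :
    HasFDerivAt (fun q => fderiv ℝ g q v)
      ((ContinuousLinearMap.apply ℝ ℝ v).comp (fderiv ℝ (fderiv ℝ g) p)) p := by
  have h1 : ContDiff ℝ 1 (fderiv ℝ g) := hg.fderiv_right (by norm_num)
  have h2 : DifferentiableAt ℝ (fderiv ℝ g) p := (h1.differentiable one_ne_zero) p
  exact (ContinuousLinearMap.apply ℝ ℝ v).hasFDerivAt.comp p h2.hasFDerivAt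

lemma hasDerivAt_fderiv_comp2 {g : ℝ × ℝ → ℝ} (hg : ContDiff ℝ 2 g) (v : ℝ × ℝ)
    {u w : ℝ → ℝ} {u' w' t : ℝ} (hu : HasDerivAt u u' t) (hw : HasDerivAt w w' t) :
    HasDerivAt (fun s => fderiv ℝ g (u s, w s) v)
      (fderiv ℝ (fderiv ℝ g) (u t, w t) (u', w') v) t :=
  by have hc := hu.prodMk hw; exact (hasFDerivAt_applyv hg v (u t, w t)).comp_hasDerivAt t hc

lemma H_expand (H : ℝ×ℝ →L[ℝ] (ℝ×ℝ →L[ℝ] ℝ)) (a b c d : ℝ) :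
    H (a,b) (c,d) = a*(c*(H (1,0) (1,0))) + a*(d*(H (1,0) (0,1)))
      + b*(c*(H (0,1) (1,0))) + b*(d*(H (0,1) (0,1))) := by
  have h1 : ((a,b) : ℝ×ℝ) = a • ((1,0):ℝ×ℝ) + b • ((0,1):ℝ×ℝ) := by simp
  have h2 : ((c,d) : ℝ×ℝ) = c • ((1,0):ℝ×ℝ) + d • ((0,1):ℝ×ℝ) := by simp
  rw [h1, h2]
  simp only [map_add, map_smul, ContinuousLinearMap.add_apply,
    ContinuousLinearMap.smul_apply, ContinuousLinearMap.coe_smul', Pi.smul_apply, smul_eq_mul]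
  ring

open Real in
set_option maxHeartbeats 1000000 in
/-- For a `C²` function `g : ℝ × ℝ → ℝ` and
`F (x₁, x₂) = g (x₁, x)` with `x = √(x₁² + x₂²)`, at every `(x₁, x₂) ≠ (0, 0)` the
Laplacian of `F` equals
`g₁₁ + g₂₂ + 2 (x₁/x) g₁₂ + (1/x) g₂` evaluated at `(x₁, x)` —
the Laplacian in the nested rectangular coordinate system `(x₁, x)`. -/
theorem laplacian_nested_coordinates (g : ℝ × ℝ → ℝ) (hg : ContDiff ℝ 2 g)
    (x₁ x₂ : ℝ) (h : (x₁, x₂) ≠ (0, 0)) :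
    lap2 (fun a b => g (a, Real.sqrt (a ^ 2 + b ^ 2))) x₁ x₂ =
      pd1 (pd1 g) (x₁, Real.sqrt (x₁ ^ 2 + x₂ ^ 2)) +
      pd2 (pd2 g) (x₁, Real.sqrt (x₁ ^ 2 + x₂ ^ 2)) +
      2 * (x₁ / Real.sqrt (x₁ ^ 2 + x₂ ^ 2)) *
        pd2 (pd1 g) (x₁, Real.sqrt (x₁ ^ 2 + x₂ ^ 2)) +
      (1 / Real.sqrt (x₁ ^ 2 + x₂ ^ 2)) *
        pd2 g (x₁, Real.sqrt (x₁ ^ 2 + x₂ ^ 2)) := by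
  have hgd : Differentiable ℝ g := hg.differentiable two_ne_zero
  have hx : x₁^2 + x₂^2 ≠ 0 := by
    intro h0
    apply h
    have h1 : x₁ = 0 := by nlinarith [sq_nonneg x₁, sq_nonneg x₂]
    have h2 : x₂ = 0 := by nlinarith [sq_nonneg x₁, sq_nonneg x₂]
    rw [h1, h2]
  set R := Real.sqrt (x₁^2 + x₂^2) with hRdef
  have hRsq : R^2 = x₁^2 + x₂^2 := Real.sq_sqrt (by positivity)
  have hRpos : 0 < R := Real.sqrt_pos.2 (lt_of_le_of_ne (by positivity) (Ne.symm hx))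
  have hRne : R ≠ 0 := ne_of_gt hRpos
  set f1 : ℝ×ℝ → ℝ := fun p => fderiv ℝ g p (1,0) with hf1
  set f2 : ℝ×ℝ → ℝ := fun p => fderiv ℝ g p (0,1) with hf2
  set H := fderiv ℝ (fderiv ℝ g) (x₁, R) with hHdef
  -- pd1 g = f1, pd2 g = f2
  have pd1g : pd1 g = f1 := by
    funext p
    have hd := hasDerivAt_comp2 (h := g) (hgd _) (hasDerivAt_id p.1) (hasDerivAt_const p.1 p.2)
    simpa [pd1, hf1] using hd.deriv
  have pd2g : pd2 g = f2 := by
    funext p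
    have hd := hasDerivAt_comp2 (h := g) (hgd _) (hasDerivAt_const p.2 p.1) (hasDerivAt_id p.2)
    simpa [pd2, hf2] using hd.deriv
  -- second partials
  have hp11 : pd1 f1 (x₁, R) = H (1,0) (1,0) := by
    have hd := hasDerivAt_fderiv_comp2 hg (1,0) (hasDerivAt_id x₁) (hasDerivAt_const x₁ R)
    simpa [pd1, hf1, hHdef] using hd.deriv
  have hp22 : pd2 f2 (x₁, R) = H (0,1) (0,1) := by
    have hd := hasDerivAt_fderiv_comp2 hg (0,1) (hasDerivAt_const R x₁) (hasDerivAt_id R)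
    simpa [pd2, hf2, hHdef] using hd.deriv
  have hp21 : pd2 f1 (x₁, R) = H (0,1) (1,0) := by
    have hd := hasDerivAt_fderiv_comp2 hg (1,0) (hasDerivAt_const R x₁) (hasDerivAt_id R)
    simpa [pd2, hf1, hHdef] using hd.deriv
  -- symmetry
  have hsym : H (1,0) (0,1) = H (0,1) (1,0) :=
    (hg.contDiffAt.isSymmSndFDerivAt (by simp)) (1,0) (0,1)
  -- first derivative formulas on neighborhoods
  have ev1 : (fun s => deriv (fun u => g (u, Real.sqrt (u^2 + x₂^2))) s) =ᶠ[nhds x₁]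
      fun u => f1 (u, Real.sqrt (u^2+x₂^2)) +
        f2 (u, Real.sqrt (u^2+x₂^2)) * (u / Real.sqrt (u^2+x₂^2)) := by
    have hopen : IsOpen {u : ℝ | u^2 + x₂^2 ≠ 0} :=
      isOpen_ne_fun (by continuity) continuous_const
    filter_upwards [hopen.mem_nhds hx] with u hu
    have hd := hasDerivAt_comp2 (h := g) (hgd _) (hasDerivAt_id u) (hasDerivAt_sqrt_comp hu)
    simpa [hf1, hf2, mul_comm] using hd.deriv
  have ev2 : (fun s => deriv (fun u => g (x₁, Real.sqrt (x₁^2 + u^2))) s) =ᶠ[nhds x₂]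
      fun v => f2 (x₁, Real.sqrt (x₁^2+v^2)) * (v / Real.sqrt (x₁^2+v^2)) := by
    have hopen : IsOpen {v : ℝ | x₁^2 + v^2 ≠ 0} :=
      isOpen_ne_fun (by continuity) continuous_const
    filter_upwards [hopen.mem_nhds hx] with v hv
    have hd := hasDerivAt_comp2 (h := g) (hgd _) (hasDerivAt_const v x₁) (hasDerivAt_sqrt_comp' hv)
    simpa [hf1, hf2, mul_comm] using hd.deriv
  -- second derivatives
  have hA : HasDerivAt (fun u => f1 (u, Real.sqrt (u^2+x₂^2))) (H (1, x₁/R) (1,0)) x₁ := by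
    have hd := hasDerivAt_fderiv_comp2 hg (1,0) (hasDerivAt_id x₁) (hasDerivAt_sqrt_comp hx)
    simpa [hf1, hHdef] using hd
  have hB : HasDerivAt (fun u => f2 (u, Real.sqrt (u^2+x₂^2))) (H (1, x₁/R) (0,1)) x₁ := by
    have hd := hasDerivAt_fderiv_comp2 hg (0,1) (hasDerivAt_id x₁) (hasDerivAt_sqrt_comp hx)
    simpa [hf2, hHdef] using hd
  have hq : HasDerivAt (fun u => u / Real.sqrt (u^2+x₂^2))
      ((1*R - x₁*(x₁/R))/R^2) x₁ :=
    (hasDerivAt_id x₁).div (hasDerivAt_sqrt_comp hx) hRne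
  have hT1 : HasDerivAt (fun u => f1 (u, Real.sqrt (u^2+x₂^2)) +
      f2 (u, Real.sqrt (u^2+x₂^2)) * (u / Real.sqrt (u^2+x₂^2)))
      (H (1, x₁/R) (1,0) + (H (1, x₁/R) (0,1) * (x₁/R) +
        f2 (x₁, R) * ((1*R - x₁*(x₁/R))/R^2))) x₁ := by
    have := hA.add (hB.mul hq)
    exact this
  have hB2 : HasDerivAt (fun v => f2 (x₁, Real.sqrt (x₁^2+v^2))) (H (0, x₂/R) (0,1)) x₂ := by
    have hd := hasDerivAt_fderiv_comp2 hg (0,1) (hasDerivAt_const x₂ x₁) (hasDerivAt_sqrt_comp' hx)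
    simpa [hf2, hHdef] using hd
  have hq2 : HasDerivAt (fun v => v / Real.sqrt (x₁^2+v^2))
      ((1*R - x₂*(x₂/R))/R^2) x₂ :=
    (hasDerivAt_id x₂).div (hasDerivAt_sqrt_comp' hx) hRne
  have hT2 : HasDerivAt (fun v => f2 (x₁, Real.sqrt (x₁^2+v^2)) * (v / Real.sqrt (x₁^2+v^2)))
      (H (0, x₂/R) (0,1) * (x₂/R) + f2 (x₁, R) * ((1*R - x₂*(x₂/R))/R^2)) x₂ := by
    have := hB2.mul hq2
    exact this
  -- put everything together
  have e1 : deriv (fun s => deriv (fun u => g (u, Real.sqrt (u^2 + x₂^2))) s) x₁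
      = H (1, x₁/R) (1,0) + (H (1, x₁/R) (0,1) * (x₁/R) +
        f2 (x₁, R) * ((1*R - x₁*(x₁/R))/R^2)) := by
    rw [ev1.deriv_eq]
    exact hT1.deriv
  have e2 : deriv (fun s => deriv (fun u => g (x₁, Real.sqrt (x₁^2 + u^2))) s) x₂
      = H (0, x₂/R) (0,1) * (x₂/R) + f2 (x₁, R) * ((1*R - x₂*(x₂/R))/R^2) := by
    rw [ev2.deriv_eq]
    exact hT2.deriv
  have hgoal : lap2 (fun a b => g (a, Real.sqrt (a ^ 2 + b ^ 2))) x₁ x₂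
      = H (1, x₁/R) (1,0) + (H (1, x₁/R) (0,1) * (x₁/R) +
        f2 (x₁, R) * ((1*R - x₁*(x₁/R))/R^2))
      + (H (0, x₂/R) (0,1) * (x₂/R) + f2 (x₁, R) * ((1*R - x₂*(x₂/R))/R^2)) := by
    rw [lap2]
    rw [← e1, ← e2]
  rw [hgoal, pd1g, pd2g, hp11, hp22, hp21]
  rw [H_expand H 1 (x₁/R) 1 0, H_expand H 1 (x₁/R) 0 1, H_expand H 0 (x₂/R) 0 1, hsym]
  have hx2 : x₂^2 = R^2 - x₁^2 := by linarith
  ring_nf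
  rw [hx2]
  field_simp
  ring
end

section
/- The function F(x₁,x₂,x₃) = x₁·√(x₁² + x₂² + x₃²)/(x₁² + x₂²) is harmonic on the open set {(x₁,x₂,x₃) ∈ ℝ³ : x₁² + x₂² > 0} (ℝ³ with the x₃-axis removed): ΔF = 0 at every such point. -/
/-- The Laplacian `∂²F/∂x₁² + ∂²F/∂x₂² + ∂²F/∂x₃²` of a function `F : ℝ → ℝ → ℝ → ℝ`
(curried function of three real variables) at the point `(a, b, c)`. -/
noncomputable def lap3 (F : ℝ → ℝ → ℝ → ℝ) (a b c : ℝ) : ℝ :=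
  deriv (fun s => deriv (fun u => F u b c) s) a +
  deriv (fun s => deriv (fun u => F a u c) s) b +
  deriv (fun s => deriv (fun u => F a b u) s) c

lemma sqrtD1 (b c u : ℝ) (hX : 0 < u^2+b^2+c^2) :
    HasDerivAt (fun x : ℝ => Real.sqrt (x^2+b^2+c^2)) (u / Real.sqrt (u^2+b^2+c^2)) u := by
  have hs0 : Real.sqrt (u^2+b^2+c^2) ≠ 0 := (Real.sqrt_pos.2 hX).ne'
  have hinner : HasDerivAt (fun x : ℝ => x^2+b^2+c^2) (2*u) u := by
    simpa using ((hasDerivAt_pow 2 u).add_const (b^2)).add_const (c^2)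
  have h2 := (Real.hasDerivAt_sqrt hX.ne').comp u hinner
  simp only [Function.comp_def] at h2
  refine h2.congr_deriv ?_
  field_simp

lemma sqrtD2 (a c u : ℝ) (hX : 0 < a^2+u^2+c^2) :
    HasDerivAt (fun x : ℝ => Real.sqrt (a^2+x^2+c^2)) (u / Real.sqrt (a^2+u^2+c^2)) u := by
  have hs0 : Real.sqrt (a^2+u^2+c^2) ≠ 0 := (Real.sqrt_pos.2 hX).ne'
  have hinner : HasDerivAt (fun x : ℝ => a^2+x^2+c^2) (2*u) u := by
    simpa using ((hasDerivAt_pow 2 u).const_add (a^2)).add_const (c^2)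
  have h2 := (Real.hasDerivAt_sqrt hX.ne').comp u hinner
  simp only [Function.comp_def] at h2
  refine h2.congr_deriv ?_
  field_simp

lemma sqrtD3 (a b u : ℝ) (hX : 0 < a^2+b^2+u^2) :
    HasDerivAt (fun x : ℝ => Real.sqrt (a^2+b^2+x^2)) (u / Real.sqrt (a^2+b^2+u^2)) u := by
  have hs0 : Real.sqrt (a^2+b^2+u^2) ≠ 0 := (Real.sqrt_pos.2 hX).ne'
  have hinner : HasDerivAt (fun x : ℝ => a^2+b^2+x^2) (2*u) u := by
    simpa using (hasDerivAt_pow 2 u).const_add (a^2+b^2)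
  have h2 := (Real.hasDerivAt_sqrt hX.ne').comp u hinner
  simp only [Function.comp_def] at h2
  refine h2.congr_deriv ?_
  field_simp

-- first derivative in x₁
lemma D1 (b c u : ℝ) (hu : 0 < u^2+b^2) :
    HasDerivAt (fun x : ℝ => x * Real.sqrt (x^2+b^2+c^2) / (x^2+b^2))
      (Real.sqrt (u^2+b^2+c^2)/(u^2+b^2) + u^2/(Real.sqrt (u^2+b^2+c^2)*(u^2+b^2))
        - 2*u^2*Real.sqrt (u^2+b^2+c^2)/(u^2+b^2)^2) u := by
  have hX : 0 < u^2+b^2+c^2 := by nlinarith [sq_nonneg c]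
  have hs0 : Real.sqrt (u^2+b^2+c^2) ≠ 0 := (Real.sqrt_pos.2 hX).ne'
  have hsq := sqrtD1 b c u hX
  have hden : HasDerivAt (fun x : ℝ => x^2+b^2) (2*u) u := by
    simpa using (hasDerivAt_pow 2 u).add_const (b^2)
  have h := ((hasDerivAt_id' (x := u)).mul hsq).div hden hu.ne'
  refine h.congr_deriv ?_
  simp only [Pi.mul_apply, Pi.pow_apply]
  set t := Real.sqrt _ with ht
  field_simp
  try ring

-- second derivative in x₁
lemma D1' (b c u : ℝ) (hu : 0 < u^2+b^2) :
    HasDerivAt (fun x : ℝ => Real.sqrt (x^2+b^2+c^2)/(x^2+b^2) + x^2/(Real.sqrt (x^2+b^2+c^2)*(x^2+b^2))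
        - 2*x^2*Real.sqrt (x^2+b^2+c^2)/(x^2+b^2)^2)
      (3*u/(Real.sqrt (u^2+b^2+c^2)*(u^2+b^2)) - u^3/(Real.sqrt (u^2+b^2+c^2)^3*(u^2+b^2))
        - 6*u*Real.sqrt (u^2+b^2+c^2)/(u^2+b^2)^2 - 4*u^3/(Real.sqrt (u^2+b^2+c^2)*(u^2+b^2)^2)
        + 8*u^3*Real.sqrt (u^2+b^2+c^2)/(u^2+b^2)^3) u := by
  have hX : 0 < u^2+b^2+c^2 := by nlinarith [sq_nonneg c]
  have hs0 : Real.sqrt (u^2+b^2+c^2) ≠ 0 := (Real.sqrt_pos.2 hX).ne'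
  have hsq := sqrtD1 b c u hX
  have hden : HasDerivAt (fun x : ℝ => x^2+b^2) (2*u) u := by
    simpa using (hasDerivAt_pow 2 u).add_const (b^2)
  have hA := hsq.div hden hu.ne'
  have hB := (hasDerivAt_pow 2 u).div (hsq.mul hden) (mul_ne_zero hs0 hu.ne')
  have hC := (((hasDerivAt_pow 2 u).const_mul 2).mul hsq).div (hden.pow 2) (pow_ne_zero 2 hu.ne')
  have h := (hA.add hB).sub hC
  refine h.congr_deriv ?_
  simp only [Pi.mul_apply, Pi.pow_apply]
  set t := Real.sqrt _ with ht
  field_simp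
  try ring

-- first derivative in x₂
lemma D2 (a c u : ℝ) (hu : 0 < a^2+u^2) :
    HasDerivAt (fun x : ℝ => a * Real.sqrt (a^2+x^2+c^2) / (a^2+x^2))
      (a*u/(Real.sqrt (a^2+u^2+c^2)*(a^2+u^2))
        - 2*a*u*Real.sqrt (a^2+u^2+c^2)/(a^2+u^2)^2) u := by
  have hX : 0 < a^2+u^2+c^2 := by nlinarith [sq_nonneg c]
  have hs0 : Real.sqrt (a^2+u^2+c^2) ≠ 0 := (Real.sqrt_pos.2 hX).ne'
  have hsq := sqrtD2 a c u hX
  have hden : HasDerivAt (fun x : ℝ => a^2+x^2) (2*u) u := by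
    simpa using (hasDerivAt_pow 2 u).const_add (a^2)
  have h := (hsq.const_mul a).div hden hu.ne'
  refine h.congr_deriv ?_
  set t := Real.sqrt _ with ht
  field_simp
  try ring

-- second derivative in x₂
lemma D2' (a c u : ℝ) (hu : 0 < a^2+u^2) :
    HasDerivAt (fun x : ℝ => a*x/(Real.sqrt (a^2+x^2+c^2)*(a^2+x^2))
        - 2*a*x*Real.sqrt (a^2+x^2+c^2)/(a^2+x^2)^2)
      (a/(Real.sqrt (a^2+u^2+c^2)*(a^2+u^2)) - a*u^2/(Real.sqrt (a^2+u^2+c^2)^3*(a^2+u^2))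
        - 4*a*u^2/(Real.sqrt (a^2+u^2+c^2)*(a^2+u^2)^2)
        - 2*a*Real.sqrt (a^2+u^2+c^2)/(a^2+u^2)^2
        + 8*a*u^2*Real.sqrt (a^2+u^2+c^2)/(a^2+u^2)^3) u := by
  have hX : 0 < a^2+u^2+c^2 := by nlinarith [sq_nonneg c]
  have hs0 : Real.sqrt (a^2+u^2+c^2) ≠ 0 := (Real.sqrt_pos.2 hX).ne'
  have hsq := sqrtD2 a c u hX
  have hden : HasDerivAt (fun x : ℝ => a^2+x^2) (2*u) u := by
    simpa using (hasDerivAt_pow 2 u).const_add (a^2)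
  have hB := ((hasDerivAt_id' (x := u)).const_mul a).div (hsq.mul hden) (mul_ne_zero hs0 hu.ne')
  have hC := (((hasDerivAt_id' (x := u)).const_mul (2*a)).mul hsq).div (hden.pow 2) (pow_ne_zero 2 hu.ne')
  have h := hB.sub hC
  refine h.congr_deriv ?_
  simp only [Pi.mul_apply, Pi.pow_apply]
  set t := Real.sqrt _ with ht
  field_simp
  try ring

-- first derivative in x₃
lemma D3 (a b u : ℝ) (hρ : a^2+b^2 ≠ 0) (hX : 0 < a^2+b^2+u^2) :
    HasDerivAt (fun x : ℝ => a * Real.sqrt (a^2+b^2+x^2) / (a^2+b^2))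
      (a*u/(Real.sqrt (a^2+b^2+u^2)*(a^2+b^2))) u := by
  have hs0 : Real.sqrt (a^2+b^2+u^2) ≠ 0 := (Real.sqrt_pos.2 hX).ne'
  have hsq := sqrtD3 a b u hX
  have h := (hsq.const_mul a).div_const (a^2+b^2)
  refine h.congr_deriv ?_
  set t := Real.sqrt _ with ht
  field_simp
  try ring

-- second derivative in x₃
lemma D3' (a b u : ℝ) (hρ : a^2+b^2 ≠ 0) (hX : 0 < a^2+b^2+u^2) :
    HasDerivAt (fun x : ℝ => a*x/(Real.sqrt (a^2+b^2+x^2)*(a^2+b^2)))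
      (a/(Real.sqrt (a^2+b^2+u^2)*(a^2+b^2))
        - a*u^2/(Real.sqrt (a^2+b^2+u^2)^3*(a^2+b^2))) u := by
  have hs0 : Real.sqrt (a^2+b^2+u^2) ≠ 0 := (Real.sqrt_pos.2 hX).ne'
  have hsq := sqrtD3 a b u hX
  have h := ((hasDerivAt_id' (x := u)).const_mul a).div
      (hsq.mul (hasDerivAt_const u (a^2+b^2))) (mul_ne_zero hs0 hρ)
  refine h.congr_deriv ?_
  simp only [Pi.mul_apply, Pi.pow_apply]
  set t := Real.sqrt _ with ht
  field_simp
  try ring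

lemma final_alg (x₁ x₂ x₃ t : ℝ) (hρ : x₁^2+x₂^2 ≠ 0) (ht0 : t ≠ 0)
    (ht2 : t^2 = x₁^2+x₂^2+x₃^2) :
    (3*x₁/(t*(x₁^2+x₂^2)) - x₁^3/(t^3*(x₁^2+x₂^2)) - 6*x₁*t/(x₁^2+x₂^2)^2
      - 4*x₁^3/(t*(x₁^2+x₂^2)^2) + 8*x₁^3*t/(x₁^2+x₂^2)^3)
    + (x₁/(t*(x₁^2+x₂^2)) - x₁*x₂^2/(t^3*(x₁^2+x₂^2))
      - 4*x₁*x₂^2/(t*(x₁^2+x₂^2)^2) - 2*x₁*t/(x₁^2+x₂^2)^2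
      + 8*x₁*x₂^2*t/(x₁^2+x₂^2)^3)
    + (x₁/(t*(x₁^2+x₂^2)) - x₁*x₃^2/(t^3*(x₁^2+x₂^2))) = 0 := by
  have h3 : t^3 = (x₁^2+x₂^2+x₃^2)*t := by rw [pow_succ, ht2]
  rw [h3]
  field_simp
  try ring

/-- The function
`F (x₁, x₂, x₃) = x₁ √(x₁² + x₂² + x₃²) / (x₁² + x₂²)` is harmonic on `ℝ³` with the
`x₃`-axis removed: its Laplacian vanishes wherever `x₁² + x₂² > 0`. -/
theorem harmonic_x1_norm_div_planar_normSq (x₁ x₂ x₃ : ℝ) (h : 0 < x₁ ^ 2 + x₂ ^ 2) :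
    lap3 (fun a b c =>
        a * Real.sqrt (a ^ 2 + b ^ 2 + c ^ 2) / (a ^ 2 + b ^ 2)) x₁ x₂ x₃ = 0 := by
  have hX : 0 < x₁^2+x₂^2+x₃^2 := by nlinarith [sq_nonneg x₃]
  have hρ : (x₁^2+x₂^2) ≠ 0 := h.ne'
  have ht0 : Real.sqrt (x₁^2+x₂^2+x₃^2) ≠ 0 := (Real.sqrt_pos.2 hX).ne'
  have ht2 : Real.sqrt (x₁^2+x₂^2+x₃^2)^2 = x₁^2+x₂^2+x₃^2 := Real.sq_sqrt hX.le
  have hopen1 : IsOpen {p : ℝ | 0 < p^2 + x₂^2} :=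
    isOpen_lt continuous_const ((continuous_pow 2).add continuous_const)
  have hopen2 : IsOpen {p : ℝ | 0 < x₁^2 + p^2} :=
    isOpen_lt continuous_const (continuous_const.add (continuous_pow 2))
  have hev1 : (fun y => deriv (fun u => u * Real.sqrt (u^2+x₂^2+x₃^2)/(u^2+x₂^2)) y)
      =ᶠ[nhds x₁] (fun y => Real.sqrt (y^2+x₂^2+x₃^2)/(y^2+x₂^2)
          + y^2/(Real.sqrt (y^2+x₂^2+x₃^2)*(y^2+x₂^2))
          - 2*y^2*Real.sqrt (y^2+x₂^2+x₃^2)/(y^2+x₂^2)^2) := by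
    filter_upwards [hopen1.mem_nhds h] with y hy
    exact (D1 x₂ x₃ y hy).deriv
  have h1 : deriv (fun y => deriv (fun u => u * Real.sqrt (u^2+x₂^2+x₃^2)/(u^2+x₂^2)) y) x₁
      = 3*x₁/(Real.sqrt (x₁^2+x₂^2+x₃^2)*(x₁^2+x₂^2))
        - x₁^3/(Real.sqrt (x₁^2+x₂^2+x₃^2)^3*(x₁^2+x₂^2))
        - 6*x₁*Real.sqrt (x₁^2+x₂^2+x₃^2)/(x₁^2+x₂^2)^2
        - 4*x₁^3/(Real.sqrt (x₁^2+x₂^2+x₃^2)*(x₁^2+x₂^2)^2)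
        + 8*x₁^3*Real.sqrt (x₁^2+x₂^2+x₃^2)/(x₁^2+x₂^2)^3 := by
    rw [hev1.deriv_eq]; exact (D1' x₂ x₃ x₁ h).deriv
  have hev2 : (fun y => deriv (fun u => x₁ * Real.sqrt (x₁^2+u^2+x₃^2)/(x₁^2+u^2)) y)
      =ᶠ[nhds x₂] (fun y => x₁*y/(Real.sqrt (x₁^2+y^2+x₃^2)*(x₁^2+y^2))
          - 2*x₁*y*Real.sqrt (x₁^2+y^2+x₃^2)/(x₁^2+y^2)^2) := by
    filter_upwards [hopen2.mem_nhds h] with y hy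
    exact (D2 x₁ x₃ y hy).deriv
  have h2 : deriv (fun y => deriv (fun u => x₁ * Real.sqrt (x₁^2+u^2+x₃^2)/(x₁^2+u^2)) y) x₂
      = x₁/(Real.sqrt (x₁^2+x₂^2+x₃^2)*(x₁^2+x₂^2))
        - x₁*x₂^2/(Real.sqrt (x₁^2+x₂^2+x₃^2)^3*(x₁^2+x₂^2))
        - 4*x₁*x₂^2/(Real.sqrt (x₁^2+x₂^2+x₃^2)*(x₁^2+x₂^2)^2)
        - 2*x₁*Real.sqrt (x₁^2+x₂^2+x₃^2)/(x₁^2+x₂^2)^2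
        + 8*x₁*x₂^2*Real.sqrt (x₁^2+x₂^2+x₃^2)/(x₁^2+x₂^2)^3 := by
    rw [hev2.deriv_eq]; exact (D2' x₁ x₃ x₂ h).deriv
  have hev3 : (fun z => deriv (fun u => x₁ * Real.sqrt (x₁^2+x₂^2+u^2)/(x₁^2+x₂^2)) z)
      = (fun z => x₁*z/(Real.sqrt (x₁^2+x₂^2+z^2)*(x₁^2+x₂^2))) := by
    funext z
    exact (D3 x₁ x₂ z hρ (by nlinarith [sq_nonneg z])).deriv
  have h3 : deriv (fun z => deriv (fun u => x₁ * Real.sqrt (x₁^2+x₂^2+u^2)/(x₁^2+x₂^2)) z) x₃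
      = x₁/(Real.sqrt (x₁^2+x₂^2+x₃^2)*(x₁^2+x₂^2))
        - x₁*x₃^2/(Real.sqrt (x₁^2+x₂^2+x₃^2)^3*(x₁^2+x₂^2)) := by
    rw [hev3]; exact (D3' x₁ x₂ x₃ hρ hX).deriv
  have hlap : lap3 (fun a b c =>
        a * Real.sqrt (a ^ 2 + b ^ 2 + c ^ 2) / (a ^ 2 + b ^ 2)) x₁ x₂ x₃
      = deriv (fun y => deriv (fun u => u * Real.sqrt (u^2+x₂^2+x₃^2)/(u^2+x₂^2)) y) x₁
      + deriv (fun y => deriv (fun u => x₁ * Real.sqrt (x₁^2+u^2+x₃^2)/(x₁^2+u^2)) y) x₂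
      + deriv (fun z => deriv (fun u => x₁ * Real.sqrt (x₁^2+x₂^2+u^2)/(x₁^2+x₂^2)) z) x₃ := rfl
  rw [hlap, h1, h2, h3]
  exact final_alg x₁ x₂ x₃ _ hρ ht0 ht2
end
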